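/- Suppose Λ(D, b) is nonempty. Then the set { σ(D, q^ℓ, b_ℓ)/ℓ : ℓ ∈ Λ(D, b) } admits a minimum, and this minimum is attained at some ℓ ∈ Λ(D, b) with ℓ ≤ ∏_{j=1}^m (D_j^+ − D_j^- + 1). Equivalently, there exists ℓ₀ ∈ Λ(D, b) with ℓ₀ ≤ ∏_{j=1}^m (D_j^+ − D_j^- + 1) such that σ(D, q^h, b_h)/h ≥ σ(D, q^{ℓ₀}, b_{ℓ₀})/ℓ₀ for every h ∈ Λ(D, b). -/

import Mathlib

open Finset

/-- `Lset q ℓ d b` is the set `L(D, q^ℓ, b_ℓ)`. -/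
def Lset (q ℓ : ℕ) {m n : ℕ} (d : Fin n → Fin m → ℤ) (b : Fin m → ℤ) : Set (Fin n → ℕ) :=
  {u | (∀ i, u i ≤ q ^ ℓ - 1) ∧
    ∀ j, ((q : ℤ) ^ ℓ - 1) ∣
      (∑ i, (u i : ℤ) * d i j + ((q : ℤ) ^ ℓ - 1) / ((q : ℤ) - 1) * b j)}

/-- `Λ(D, b)` is the set of `ℓ ≥ 1` with `L(D, q^ℓ, b_ℓ)` nonempty. -/
def Lambda (q : ℕ) {m n : ℕ} (d : Fin n → Fin m → ℤ) (b : Fin m → ℤ) : Set ℕ :=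
  {ℓ | 1 ≤ ℓ ∧ (Lset q ℓ d b).Nonempty}

/-- `σ_p` of a tuple: the sum over the coordinates of the base-`p` digit sums. -/
def sigmaTuple (p : ℕ) {n : ℕ} (u : Fin n → ℕ) : ℕ :=
  ∑ i, (Nat.digits p (u i)).sum

/-- `σ(D, q^ℓ, b_ℓ) = min { σ_p(u) : u ∈ L(D, q^ℓ, b_ℓ) }`. -/
noncomputable def sigmaMin (p q ℓ : ℕ) {m n : ℕ} (d : Fin n → Fin m → ℤ)
    (b : Fin m → ℤ) : ℕ :=
  sInf (sigmaTuple p '' Lset q ℓ d b)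

/- ## auxiliary -/

lemma sum_digits_step (p : ℕ) (hp : 2 ≤ p) (a : ℕ) :
    (Nat.digits p a).sum = a % p + (Nat.digits p (a / p)).sum := by
  rcases Nat.eq_zero_or_pos a with h | h
  · simp [h]
  · rw [Nat.digits_def' hp h]; simp

lemma sum_digits_split (p : ℕ) (hp : 2 ≤ p) (K : ℕ) :
    ∀ a r : ℕ, a < p ^ K →
      (Nat.digits p (a + p ^ K * r)).sum = (Nat.digits p a).sum + (Nat.digits p r).sum := by
  induction K with
  | zero =>
    intro a r ha
    have : a = 0 := by simpa using Nat.lt_one_iff.mp (by simpa using ha)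
    subst this; simp
  | succ K ih =>
    intro a r ha
    have hp0 : 0 < p := by omega
    have h1 : (a + p ^ (K + 1) * r) % p = a % p := by
      rw [show p ^ (K + 1) * r = p * (p ^ K * r) by ring, Nat.add_mul_mod_self_left]
    have h2 : (a + p ^ (K + 1) * r) / p = a / p + p ^ K * r := by
      rw [show p ^ (K + 1) * r = p * (p ^ K * r) by ring, Nat.add_mul_div_left _ _ hp0]
    have h3 : a / p < p ^ K := by
      rw [Nat.div_lt_iff_lt_mul hp0]
      calc a < p ^ (K + 1) := ha
        _ = p ^ K * p := by ring
    rw [sum_digits_step p hp (a + p ^ (K + 1) * r), h1, h2, ih _ r h3,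
      sum_digits_step p hp a]
    omega

/-- geometric sum -/
def Egeo (q : ℕ) (t : ℕ) : ℤ := ∑ k ∈ range t, (q : ℤ) ^ k

lemma Egeo_add (q a c : ℕ) : Egeo q (a + c) = Egeo q a + (q : ℤ) ^ a * Egeo q c := by
  unfold Egeo
  rw [Finset.sum_range_add, Finset.mul_sum]
  congr 1
  exact Finset.sum_congr rfl fun k _ => by rw [pow_add]

lemma Egeo_mul (q t : ℕ) : Egeo q t * ((q : ℤ) - 1) = (q : ℤ) ^ t - 1 :=
  geom_sum_mul _ _

lemma Egeo_nonneg (q t : ℕ) : 0 ≤ Egeo q t :=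
  Finset.sum_nonneg fun k _ => pow_nonneg (by positivity) _

lemma Egeo_div (q : ℕ) (hq : 2 ≤ q) (t : ℕ) :
    ((q : ℤ) ^ t - 1) / ((q : ℤ) - 1) = Egeo q t := by
  rw [← Egeo_mul, Int.mul_ediv_cancel]
  have : (2 : ℤ) ≤ (q : ℤ) := by exact_mod_cast hq
  omega

def Dpos {m n : ℕ} (d : Fin n → Fin m → ℤ) (j : Fin m) : ℤ :=
  ∑ i ∈ Finset.univ.filter (fun i => 0 < d i j), d i j

def Dneg {m n : ℕ} (d : Fin n → Fin m → ℤ) (j : Fin m) : ℤ :=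
  ∑ i ∈ Finset.univ.filter (fun i => d i j < 0), d i j

noncomputable def Pbound {m n : ℕ} (d : Fin n → Fin m → ℤ) : ℕ :=
  ∏ j, (Dpos d j - Dneg d j + 1).toNat

lemma Dpos_nonneg {m n : ℕ} (d : Fin n → Fin m → ℤ) (j : Fin m) : 0 ≤ Dpos d j :=
  Finset.sum_nonneg fun i hi => le_of_lt (Finset.mem_filter.mp hi).2

lemma Dneg_nonpos {m n : ℕ} (d : Fin n → Fin m → ℤ) (j : Fin m) : Dneg d j ≤ 0 :=
  Finset.sum_nonpos fun i hi => le_of_lt (Finset.mem_filter.mp hi).2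

lemma Pbound_pos {m n : ℕ} (d : Fin n → Fin m → ℤ) : 1 ≤ Pbound d := by
  refine Finset.one_le_prod' fun j _ => ?_
  have h1 := Dpos_nonneg d j
  have h2 := Dneg_nonpos d j
  omega

lemma sum_le_bound {m n : ℕ} (d : Fin n → Fin m → ℤ) (j : Fin m) (w : Fin n → ℤ) (M : ℤ)
    (h0 : ∀ i, 0 ≤ w i) (hM : ∀ i, w i ≤ M) :
    M * Dneg d j ≤ ∑ i, w i * d i j ∧ ∑ i, w i * d i j ≤ M * Dpos d j := by
  constructor
  · rw [Dneg, Finset.mul_sum, Finset.sum_filter]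
    refine Finset.sum_le_sum fun i _ => ?_
    by_cases h : d i j < 0
    · simp only [h, if_pos]
      exact mul_le_mul_of_nonpos_right (hM i) (le_of_lt h)
    · simp only [h, if_neg, not_false_iff]
      exact mul_nonneg (h0 i) (by omega)
  · rw [Dpos, Finset.mul_sum, Finset.sum_filter]
    refine Finset.sum_le_sum fun i _ => ?_
    by_cases h : 0 < d i j
    · simp only [h, if_pos]
      exact mul_le_mul_of_nonneg_right (hM i) (le_of_lt h)
    · simp only [h, if_neg, not_false_iff]
      exact mul_nonpos_of_nonneg_of_nonpos (h0 i) (by omega)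

section
variable {m n : ℕ} (d : Fin n → Fin m → ℤ) (b : Fin m → ℤ)

lemma split_lemma (p f q : ℕ) (hp2 : 2 ≤ p) (hf : 1 ≤ f) (hq : q = p ^ f)
    (hb : ∀ j, 0 ≤ b j ∧ b j ≤ (q : ℤ) - 2)
    (ℓ : ℕ) (hℓP : Pbound d < ℓ) (u : Fin n → ℕ) (hu : u ∈ Lset q ℓ d b) :
    ∃ ℓ₁ ℓ₂ : ℕ, 0 < ℓ₁ ∧ 0 < ℓ₂ ∧ ℓ₁ + ℓ₂ = ℓ ∧
      ∃ y ∈ Lset q ℓ₁ d b, ∃ z ∈ Lset q ℓ₂ d b,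
        sigmaTuple p y + sigmaTuple p z = sigmaTuple p u := by
  classical
  have hq2 : 2 ≤ q := by
    subst hq; calc 2 ≤ p := hp2
      _ ≤ p ^ f := Nat.le_self_pow (by omega) p
  have hxq : (2 : ℤ) ≤ (q : ℤ) := by exact_mod_cast hq2
  have hqpow_pos : ∀ t : ℕ, (0 : ℤ) < (q : ℤ) ^ t := fun t => by positivity
  have hqpow_posN : ∀ t : ℕ, 0 < q ^ t := fun t => Nat.pow_pos (by omega)
  have hℓ1 : 1 ≤ ℓ := le_of_lt (lt_of_le_of_lt (Pbound_pos d) hℓP)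
  have hxl1 : (0 : ℤ) < (q : ℤ) ^ ℓ - 1 := by
    have h1 : (q : ℤ) ≤ (q : ℤ) ^ ℓ := le_self_pow₀ (by omega) (by omega)
    omega
  obtain ⟨hu1, hu2⟩ := hu
  -- cast bound on u
  have hub : ∀ i, (u i : ℤ) ≤ (q : ℤ) ^ ℓ - 1 := by
    intro i
    have h1 : u i < q ^ ℓ := by have := hu1 i; have := hqpow_posN ℓ; omega
    have : (u i : ℤ) < (q : ℤ) ^ ℓ := by exact_mod_cast h1
    omega
  have hu2' : ∀ j, ((q : ℤ) ^ ℓ - 1) ∣ (∑ i, (u i : ℤ) * d i j + Egeo q ℓ * b j) := by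
    intro j
    have := hu2 j
    rwa [Egeo_div q hq2 ℓ] at this
  -- the carry c
  set c : Fin m → ℤ := fun j => (∑ i, (u i : ℤ) * d i j + Egeo q ℓ * b j) / ((q : ℤ) ^ ℓ - 1)
    with hcdef
  have hc : ∀ j, ∑ i, (u i : ℤ) * d i j + Egeo q ℓ * b j = ((q : ℤ) ^ ℓ - 1) * c j :=
    fun j => (Int.ediv_mul_cancel (hu2' j)).symm.trans (mul_comm _ _)
  -- bounds on c
  have hcge : ∀ j, Dneg d j ≤ c j := by
    intro j
    have hsb := (sum_le_bound d j (fun i => (u i : ℤ)) ((q : ℤ) ^ ℓ - 1)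
      (fun i => by positivity) hub).1
    have hbj := hb j
    have hE0 := Egeo_nonneg q ℓ
    have h1 : ((q : ℤ) ^ ℓ - 1) * Dneg d j ≤ ((q : ℤ) ^ ℓ - 1) * c j := by
      rw [← hc j]; nlinarith [mul_nonneg hE0 hbj.1]
    exact le_of_mul_le_mul_left h1 hxl1
  have hcle : ∀ j, c j ≤ Dpos d j := by
    intro j
    have hsb := (sum_le_bound d j (fun i => (u i : ℤ)) ((q : ℤ) ^ ℓ - 1)
      (fun i => by positivity) hub).2
    have hbj := hb j
    have hE0 := Egeo_nonneg q ℓ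
    have hEm := Egeo_mul q ℓ
    have hEb : Egeo q ℓ * b j ≤ (q : ℤ) ^ ℓ - 1 := by nlinarith
    have h1 : ((q : ℤ) ^ ℓ - 1) * c j < ((q : ℤ) ^ ℓ - 1) * (Dpos d j + 1) := by
      rw [← hc j]; nlinarith
    have := lt_of_mul_lt_mul_left h1 (le_of_lt hxl1)
    omega
  -- partial sums and carries
  set S : ℕ → Fin m → ℤ := fun t j => ∑ i, ((u i % q ^ t : ℕ) : ℤ) * d i j with hSdef
  have hdvd : ∀ t, t ≤ ℓ → ∀ j, ((q : ℤ) ^ t) ∣ (S t j + Egeo q t * b j - c j * ((q : ℤ) ^ t - 1)) := by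
    intro t ht j
    have hA : ((q : ℤ) ^ t) ∣ (S t j - ∑ i, (u i : ℤ) * d i j) := by
      rw [hSdef]
      simp only
      rw [← Finset.sum_sub_distrib]
      refine Finset.dvd_sum fun i _ => ?_
      have h : (u i : ℤ) = (q : ℤ) ^ t * ((u i / q ^ t : ℕ) : ℤ) + ((u i % q ^ t : ℕ) : ℤ) := by
        exact_mod_cast (Nat.div_add_mod (u i) (q ^ t)).symm
      exact ⟨-(((u i / q ^ t : ℕ) : ℤ) * d i j), by linear_combination (-(d i j)) * h⟩
    have hB : ((q : ℤ) ^ t) ∣ ((Egeo q t - Egeo q ℓ) * b j) := by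
      refine dvd_mul_of_dvd_left ⟨-(Egeo q (ℓ - t)), ?_⟩ _
      have h := Egeo_add q t (ℓ - t)
      rw [show t + (ℓ - t) = ℓ by omega] at h
      linarith [h]
    have hD : ((q : ℤ) ^ t) ∣ (c j * ((q : ℤ) ^ ℓ - (q : ℤ) ^ t)) := by
      refine ⟨c j * ((q : ℤ) ^ (ℓ - t) - 1), ?_⟩
      rw [show (q : ℤ) ^ ℓ = (q : ℤ) ^ t * (q : ℤ) ^ (ℓ - t) by
        rw [← pow_add]; congr 1; omega]
      ring
    have key : S t j + Egeo q t * b j - c j * ((q : ℤ) ^ t - 1) =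
        (S t j - ∑ i, (u i : ℤ) * d i j) + (Egeo q t - Egeo q ℓ) * b j
          + c j * ((q : ℤ) ^ ℓ - (q : ℤ) ^ t) := by
      linear_combination hc j
    rw [key]
    exact dvd_add (dvd_add hA hB) hD
  set γ : ℕ → Fin m → ℤ :=
    fun t j => (S t j + Egeo q t * b j - c j * ((q : ℤ) ^ t - 1)) / (q : ℤ) ^ t with hγdef
  have hγ : ∀ t, t ≤ ℓ → ∀ j,
      S t j + Egeo q t * b j - c j * ((q : ℤ) ^ t - 1) = (q : ℤ) ^ t * γ t j :=
    fun t ht j => (Int.mul_ediv_cancel' (hdvd t ht j)).symm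
  -- bounds on the carries
  have hmodb : ∀ t, ∀ i, (0 : ℤ) ≤ ((u i % q ^ t : ℕ) : ℤ) ∧
      ((u i % q ^ t : ℕ) : ℤ) ≤ (q : ℤ) ^ t - 1 := by
    intro t i
    constructor
    · positivity
    · have h1 : u i % q ^ t < q ^ t := Nat.mod_lt _ (hqpow_posN t)
      have h2 : ((u i % q ^ t : ℕ) : ℤ) < (q : ℤ) ^ t := by exact_mod_cast h1
      omega
  have hγb : ∀ t, t ≤ ℓ → ∀ j, Dneg d j - c j ≤ γ t j ∧ γ t j ≤ Dpos d j - c j := by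
    intro t ht j
    have hsb := sum_le_bound d j (fun i => ((u i % q ^ t : ℕ) : ℤ)) ((q : ℤ) ^ t - 1)
      (fun i => (hmodb t i).1) (fun i => (hmodb t i).2)
    have hSl : ((q : ℤ) ^ t - 1) * Dneg d j ≤ S t j := hsb.1
    have hSu : S t j ≤ ((q : ℤ) ^ t - 1) * Dpos d j := hsb.2
    have hbj := hb j
    have hE0 := Egeo_nonneg q t
    have hEm := Egeo_mul q t
    have hb1 : 0 ≤ Egeo q t * b j := mul_nonneg hE0 hbj.1
    have hb2 : Egeo q t * b j ≤ (q : ℤ) ^ t - 1 := by nlinarith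
    have hgeq := hγ t ht j
    have hpos := hqpow_pos t
    constructor
    · have h1 : (q : ℤ) ^ t * (Dneg d j - c j) ≤ (q : ℤ) ^ t * γ t j := by
        rw [← hgeq]
        nlinarith [hcge j]
      exact le_of_mul_le_mul_left h1 hpos
    · have h1 : (q : ℤ) ^ t * γ t j < (q : ℤ) ^ t * (Dpos d j - c j + 1) := by
        rw [← hgeq]
        nlinarith [hcle j]
      have := lt_of_mul_lt_mul_left h1 (le_of_lt hpos)
      omega
  -- pigeonhole
  have hmaps : ∀ t ∈ Finset.range ℓ, (fun j => γ t j) ∈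
      Fintype.piFinset (fun j => Finset.Icc (Dneg d j - c j) (Dpos d j - c j)) := by
    intro t htr
    rw [Fintype.mem_piFinset]
    intro j
    rw [Finset.mem_Icc]
    exact hγb t (le_of_lt (Finset.mem_range.mp htr)) j
  have hcard : (Fintype.piFinset (fun j => Finset.Icc (Dneg d j - c j) (Dpos d j - c j))).card
      < (Finset.range ℓ).card := by
    rw [Finset.card_range, Fintype.card_piFinset]
    calc (∏ j, (Finset.Icc (Dneg d j - c j) (Dpos d j - c j)).card)
        = Pbound d := by
          unfold Pbound
          refine Finset.prod_congr rfl fun j _ => ?_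
          rw [Int.card_Icc]
          congr 1
          ring
      _ < ℓ := hℓP
  obtain ⟨t1, ht1, t2, ht2, htne, hteq⟩ :=
    Finset.exists_ne_map_eq_of_card_lt_of_maps_to hcard hmaps
  obtain ⟨t, ℓ₁, hℓ₁pos, ht'ℓ, hγeq⟩ :
      ∃ t ℓ₁ : ℕ, 0 < ℓ₁ ∧ t + ℓ₁ < ℓ ∧ ∀ j, γ (t + ℓ₁) j = γ t j := by
    rcases Nat.lt_or_ge t1 t2 with hlt | hge
    · exact ⟨t1, t2 - t1, by omega, by have := Finset.mem_range.mp ht2; omega,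
        fun j => by rw [show t1 + (t2 - t1) = t2 by omega]; exact (congrFun hteq j).symm⟩
    · exact ⟨t2, t1 - t2, by omega, by have := Finset.mem_range.mp ht1; omega,
        fun j => by rw [show t2 + (t1 - t2) = t1 by omega]; exact congrFun hteq j⟩
  set r := ℓ - (t + ℓ₁) with hrdef
  have hrpos : 0 < r := by omega
  set y : Fin n → ℕ := fun i => u i / q ^ t % q ^ ℓ₁ with hydef
  set z : Fin n → ℕ := fun i => u i % q ^ t + q ^ t * (u i / q ^ (t + ℓ₁)) with hzdef
  have hupoint : ∀ i, u i % q ^ (t + ℓ₁) = q ^ t * y i + u i % q ^ t := by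
    intro i
    have h1 : u i % (q ^ t * q ^ ℓ₁) / q ^ t = y i := Nat.mod_mul_right_div_self _ _ _
    have h2 : u i % (q ^ t * q ^ ℓ₁) % q ^ t = u i % q ^ t :=
      Nat.mod_mod_of_dvd _ (dvd_mul_right _ _)
    have h3 := Nat.div_add_mod (u i % (q ^ t * q ^ ℓ₁)) (q ^ t)
    rw [h1, h2] at h3
    rw [pow_add]
    omega
  have hCb : ∀ i, u i / q ^ (t + ℓ₁) < q ^ r := by
    intro i
    rw [Nat.div_lt_iff_lt_mul (hqpow_posN _)]
    calc u i < q ^ ℓ := by have := hu1 i; have := hqpow_posN ℓ; omega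
      _ = q ^ r * q ^ (t + ℓ₁) := by rw [← pow_add]; congr 1; omega
  have hY : ∀ j, S (t + ℓ₁) j = (q : ℤ) ^ t * (∑ i, (y i : ℤ) * d i j) + S t j := by
    intro j
    rw [hSdef]
    simp only
    rw [Finset.mul_sum, ← Finset.sum_add_distrib]
    refine Finset.sum_congr rfl fun i _ => ?_
    have h : ((u i % q ^ (t + ℓ₁) : ℕ) : ℤ) = (q : ℤ) ^ t * (y i : ℤ) + ((u i % q ^ t : ℕ) : ℤ) := by
      exact_mod_cast congrArg (Nat.cast : ℕ → ℤ) (hupoint i)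
    rw [h]; ring
  have hsU : ∀ j, ∑ i, (u i : ℤ) * d i j =
      (q : ℤ) ^ t * (q : ℤ) ^ ℓ₁ * (∑ i, ((u i / q ^ (t + ℓ₁) : ℕ) : ℤ) * d i j)
        + S (t + ℓ₁) j := by
    intro j
    rw [hSdef]
    simp only
    rw [Finset.mul_sum, ← Finset.sum_add_distrib]
    refine Finset.sum_congr rfl fun i _ => ?_
    have h : (u i : ℤ) = (q : ℤ) ^ (t + ℓ₁) * ((u i / q ^ (t + ℓ₁) : ℕ) : ℤ)
        + ((u i % q ^ (t + ℓ₁) : ℕ) : ℤ) := by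
      exact_mod_cast (Nat.div_add_mod (u i) (q ^ (t + ℓ₁))).symm
    rw [h, pow_add]; ring
  have hsZ : ∀ j, ∑ i, (z i : ℤ) * d i j =
      S t j + (q : ℤ) ^ t * (∑ i, ((u i / q ^ (t + ℓ₁) : ℕ) : ℤ) * d i j) := by
    intro j
    rw [hSdef]
    simp only
    rw [Finset.mul_sum, ← Finset.sum_add_distrib]
    refine Finset.sum_congr rfl fun i _ => ?_
    have h : (z i : ℤ) = ((u i % q ^ t : ℕ) : ℤ)
        + (q : ℤ) ^ t * ((u i / q ^ (t + ℓ₁) : ℕ) : ℤ) := by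
      rw [hzdef]; push_cast; ring
    rw [h]; ring
  have hE1 : Egeo q (t + ℓ₁) = Egeo q t + (q : ℤ) ^ t * Egeo q ℓ₁ := Egeo_add q t ℓ₁
  have hP1 : (q : ℤ) ^ (t + ℓ₁) = (q : ℤ) ^ t * (q : ℤ) ^ ℓ₁ := pow_add _ _ _
  -- membership of y
  have hymem : y ∈ Lset q ℓ₁ d b := by
    constructor
    · intro i
      have h1 : y i < q ^ ℓ₁ := Nat.mod_lt _ (hqpow_posN _)
      have := hqpow_posN ℓ₁
      omega
    · intro j
      rw [Egeo_div q hq2 ℓ₁]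
      refine ⟨c j + γ t j, ?_⟩
      have H := hγ t (by omega) j
      have H' := hγ (t + ℓ₁) (by omega) j
      rw [hγeq j, hE1, hP1] at H'
      have hmul : (q : ℤ) ^ t * (∑ i, (y i : ℤ) * d i j + Egeo q ℓ₁ * b j) =
          (q : ℤ) ^ t * (((q : ℤ) ^ ℓ₁ - 1) * (c j + γ t j)) := by
        linear_combination H' - H - hY j
      exact mul_left_cancel₀ (ne_of_gt (hqpow_pos t)) hmul
  -- membership of z
  have hzmem : z ∈ Lset q (t + r) d b := by
    constructor
    · intro i
      have h1 : u i % q ^ t < q ^ t := Nat.mod_lt _ (hqpow_posN _)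
      have h2 := hCb i
      have h3 : q ^ t * (u i / q ^ (t + ℓ₁) + 1) ≤ q ^ t * q ^ r :=
        Nat.mul_le_mul_left _ (by omega)
      rw [Nat.mul_succ] at h3
      rw [hzdef]
      simp only
      rw [show q ^ (t + r) = q ^ t * q ^ r from pow_add q t r]
      omega
    · intro j
      rw [Egeo_div q hq2 (t + r)]
      refine ⟨c j, ?_⟩
      have H := hγ t (by omega) j
      have H' := hγ (t + ℓ₁) (by omega) j
      rw [hγeq j, hE1, hP1] at H'
      have hcj := hc j
      have hE2 : Egeo q ℓ = Egeo q t + (q : ℤ) ^ t * Egeo q ℓ₁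
          + (q : ℤ) ^ t * (q : ℤ) ^ ℓ₁ * Egeo q r := by
        have h := Egeo_add q (t + ℓ₁) r
        rw [show t + ℓ₁ + r = ℓ by omega] at h
        rw [h, hE1, hP1]
      have hP2 : (q : ℤ) ^ ℓ = (q : ℤ) ^ t * (q : ℤ) ^ ℓ₁ * (q : ℤ) ^ r := by
        rw [← pow_add, ← pow_add]; congr 1; omega
      rw [hE2, hP2] at hcj
      have hE3 : Egeo q (t + r) = Egeo q t + (q : ℤ) ^ t * Egeo q r := Egeo_add q t r
      have hP3 : (q : ℤ) ^ (t + r) = (q : ℤ) ^ t * (q : ℤ) ^ r := pow_add _ _ _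
      have hmul : ((q : ℤ) ^ t * (q : ℤ) ^ ℓ₁)
            * (∑ i, (z i : ℤ) * d i j + Egeo q (t + r) * b j) =
          ((q : ℤ) ^ t * (q : ℤ) ^ ℓ₁) * (((q : ℤ) ^ (t + r) - 1) * c j) := by
        rw [hE3, hP3]
        linear_combination ((q : ℤ) ^ t * (q : ℤ) ^ ℓ₁) * hsZ j - (q : ℤ) ^ t * hsU j
          - (q : ℤ) ^ t * H' + ((q : ℤ) ^ t * (q : ℤ) ^ ℓ₁) * H + (q : ℤ) ^ t * hcj
      exact mul_left_cancel₀ (by positivity) hmul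
  -- digit sums
  have hpq : ∀ w : ℕ, q ^ w = p ^ (f * w) := by intro w; rw [hq, ← pow_mul]
  have hdig : ∀ i, (Nat.digits p (y i)).sum + (Nat.digits p (z i)).sum
      = (Nat.digits p (u i)).sum := by
    intro i
    have hA : u i % q ^ t < p ^ (f * t) := by rw [← hpq]; exact Nat.mod_lt _ (hqpow_posN t)
    have hyb : y i < p ^ (f * ℓ₁) := by rw [← hpq]; exact Nat.mod_lt _ (hqpow_posN _)
    have hu_eq : u i = u i % q ^ t
        + p ^ (f * t) * (y i + p ^ (f * ℓ₁) * (u i / q ^ (t + ℓ₁))) := by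
      rw [← hpq, ← hpq]
      have h1 := Nat.mod_add_div (u i) (q ^ (t + ℓ₁))
      rw [hupoint i] at h1
      rw [Nat.mul_add, ← mul_assoc, ← pow_add]
      omega
    have hz_eq : z i = u i % q ^ t + p ^ (f * t) * (u i / q ^ (t + ℓ₁)) := by
      rw [← hpq, hzdef]
    rw [hu_eq, hz_eq, sum_digits_split p hp2 _ _ _ hA, sum_digits_split p hp2 _ _ _ hA,
      sum_digits_split p hp2 _ _ _ hyb]
    omega
  refine ⟨ℓ₁, t + r, hℓ₁pos, by omega, by omega, y, hymem, z, hzmem, ?_⟩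
  simp only [sigmaTuple]
  rw [← Finset.sum_add_distrib]
  exact Finset.sum_congr rfl fun i _ => hdig i
end

lemma sigmaMin_spec (p q ℓ : ℕ) {m n : ℕ} (d : Fin n → Fin m → ℤ) (b : Fin m → ℤ)
    (h : (Lset q ℓ d b).Nonempty) :
    ∃ u ∈ Lset q ℓ d b, sigmaTuple p u = sigmaMin p q ℓ d b := by
  obtain ⟨u, hu, hequ⟩ := Nat.sInf_mem (h.image (sigmaTuple p))
  exact ⟨u, hu, hequ⟩

lemma sigmaMin_le (p q ℓ : ℕ) {m n : ℕ} (d : Fin n → Fin m → ℤ) (b : Fin m → ℤ)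
    (u : Fin n → ℕ) (hu : u ∈ Lset q ℓ d b) : sigmaMin p q ℓ d b ≤ sigmaTuple p u :=
  Nat.sInf_le ⟨u, hu, rfl⟩

/-- If `Λ(D, b)` is nonempty, then `{σ(D, q^ℓ, b_ℓ)/ℓ : ℓ ∈ Λ(D, b)}` has a minimum,
attained at some `ℓ₀ ∈ Λ(D, b)` with `ℓ₀ ≤ ∏_j (D_j^+ − D_j^- + 1)`. -/
theorem stmt13 (p f m n : ℕ) (hp : p.Prime) (hf : 1 ≤ f) (hm : 1 ≤ m) (hn : 1 ≤ n)
    (q : ℕ) (hq : q = p ^ f)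
    (d : Fin n → Fin m → ℤ) (b : Fin m → ℤ) (hb : ∀ j, 0 ≤ b j ∧ b j ≤ (q : ℤ) - 2)
    (h : (Lambda q d b).Nonempty) :
    ∃ ℓ₀ ∈ Lambda q d b,
      (ℓ₀ : ℤ) ≤ ∏ j, ((∑ i ∈ Finset.univ.filter (fun i => 0 < d i j), d i j)
          - (∑ i ∈ Finset.univ.filter (fun i => d i j < 0), d i j) + 1) ∧
      ∀ h ∈ Lambda q d b,
        (sigmaMin p q ℓ₀ d b : ℚ) / (ℓ₀ : ℚ) ≤ (sigmaMin p q h d b : ℚ) / (h : ℚ) := by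
  have hp2 : 2 ≤ p := hp.two_le
  -- Step B : some element of Λ is at most Pbound
  have hsmall : ∀ ℓ, ℓ ∈ Lambda q d b → ∃ ℓ' ∈ Lambda q d b, ℓ' ≤ Pbound d := by
    intro ℓ
    induction ℓ using Nat.strong_induction_on with
    | _ ℓ ih =>
      intro hℓ
      by_cases hle : ℓ ≤ Pbound d
      · exact ⟨ℓ, hℓ, hle⟩
      · obtain ⟨hℓ1, u, hu⟩ := hℓ
        obtain ⟨ℓ₁, ℓ₂, h1, h2, h12, y, hy, z, hz, _⟩ :=
          split_lemma d b p f q hp2 hf hq hb ℓ (by omega) u hu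
        exact ih ℓ₁ (by omega) ⟨by omega, y, hy⟩
  obtain ⟨ℓa, hℓa⟩ := h
  obtain ⟨ℓs, hℓs, hℓsle⟩ := hsmall ℓa hℓa
  -- Step C : minimize the ratio over the finite set
  have hTfin : {ℓ | ℓ ∈ Lambda q d b ∧ ℓ ≤ Pbound d}.Finite :=
    Set.Finite.subset (Set.finite_Iic (Pbound d)) (fun x hx => hx.2)
  obtain ⟨ℓ₀, hℓ₀T, hmin⟩ := Set.exists_min_image _
    (fun ℓ => (sigmaMin p q ℓ d b : ℚ) / (ℓ : ℚ)) hTfin ⟨ℓs, hℓs, hℓsle⟩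
  have hℓ₀Λ : ℓ₀ ∈ Lambda q d b := hℓ₀T.1
  refine ⟨ℓ₀, hℓ₀Λ, ?_, ?_⟩
  · have hPZ : (Pbound d : ℤ) = ∏ j, ((∑ i ∈ Finset.univ.filter (fun i => 0 < d i j), d i j)
        - (∑ i ∈ Finset.univ.filter (fun i => d i j < 0), d i j) + 1) := by
      unfold Pbound
      rw [Nat.cast_prod]
      refine Finset.prod_congr rfl fun j _ => ?_
      have h1 := Dpos_nonneg d j
      have h2 := Dneg_nonpos d j
      rw [Int.toNat_of_nonneg (by omega)]
      rfl
    calc (ℓ₀ : ℤ) ≤ (Pbound d : ℤ) := by exact_mod_cast hℓ₀T.2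
      _ = _ := hPZ
  · intro h' hh'
    induction h' using Nat.strong_induction_on with
    | _ h' ih =>
      by_cases hle : h' ≤ Pbound d
      · exact hmin h' ⟨hh', hle⟩
      · obtain ⟨u0, hu0, hequ⟩ := sigmaMin_spec p q h' d b hh'.2
        obtain ⟨ℓ₁, ℓ₂, h1, h2, h12, y, hy, z, hz, hsum⟩ :=
          split_lemma d b p f q hp2 hf hq hb h' (by omega) u0 hu0
        have ihy := ih ℓ₁ (by omega) ⟨by omega, y, hy⟩
        have ihz := ih ℓ₂ (by omega) ⟨by omega, z, hz⟩
        have hsy : sigmaMin p q ℓ₁ d b ≤ sigmaTuple p y := sigmaMin_le p q ℓ₁ d b y hy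
        have hsz : sigmaMin p q ℓ₂ d b ≤ sigmaTuple p z := sigmaMin_le p q ℓ₂ d b z hz
        have hq1 : (0 : ℚ) < (ℓ₁ : ℚ) := by exact_mod_cast h1
        have hq2' : (0 : ℚ) < (ℓ₂ : ℚ) := by exact_mod_cast h2
        have hqh : (0 : ℚ) < (h' : ℚ) := by
          have h0 : 0 < h' := hh'.1
          exact_mod_cast h0
        have hA := (le_div_iff₀ hq1).mp ihy
        have hB := (le_div_iff₀ hq2').mp ihz
        rw [le_div_iff₀ hqh]
        have hcast : ((sigmaMin p q h' d b : ℚ)) = (sigmaTuple p y : ℚ) + (sigmaTuple p z : ℚ) := by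
          rw [← hequ, ← hsum]
          push_cast
          ring
        have hh12 : ((h' : ℚ)) = (ℓ₁ : ℚ) + (ℓ₂ : ℚ) := by exact_mod_cast h12.symm
        have hyQ : (sigmaMin p q ℓ₁ d b : ℚ) ≤ (sigmaTuple p y : ℚ) := by exact_mod_cast hsy
        have hzQ : (sigmaMin p q ℓ₂ d b : ℚ) ≤ (sigmaTuple p z : ℚ) := by exact_mod_cast hsz
        calc (sigmaMin p q ℓ₀ d b : ℚ) / (ℓ₀ : ℚ) * (h' : ℚ)
            = (sigmaMin p q ℓ₀ d b : ℚ) / (ℓ₀ : ℚ) * (ℓ₁ : ℚ)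
              + (sigmaMin p q ℓ₀ d b : ℚ) / (ℓ₀ : ℚ) * (ℓ₂ : ℚ) := by rw [hh12]; ring
          _ ≤ (sigmaMin p q ℓ₁ d b : ℚ) + (sigmaMin p q ℓ₂ d b : ℚ) := add_le_add hA hB
          _ ≤ (sigmaTuple p y : ℚ) + (sigmaTuple p z : ℚ) := add_le_add hyQ hzQ
          _ = (sigmaMin p q h' d b : ℚ) := hcast.symm
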